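/- Let n ≥ 2, δ > 2 log n + 3, and let a, b ∈ ℝⁿ be strictly decreasing with gaps exceeding δ (i.e., a_i − a_j > δ and b_i − b_j > δ whenever i < j) and mutually δ-separated (|a_i − b_j| > δ whenever a_i ≠ b_j). Suppose there exists k ∈ {0, 1, …, n−1} such that (a_1,…,a_k) = (b_1,…,b_k) and a_{k+1} > b_{k+1}. Then |Boltz(a) − Boltz(b)| > (log n)² · e^{−(a_1 − b_{k+1})}. -/

import Mathlib

open scoped BigOperators Classical
open Matrix

noncomputable section

def softmax {n : ℕ} (a : Fin n → ℝ) : Fin n → ℝ :=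
  fun i => Real.exp (a i) / ∑ j, Real.exp (a j)

def boltz {n : ℕ} (a : Fin n → ℝ) : ℝ := ∑ i, a i * softmax a i

def argmaxSet {n : ℕ} (a : Fin n → ℝ) : Finset (Fin n) :=
  Finset.univ.filter (fun i => ∀ j, a j ≤ a i)

def hardmax {n : ℕ} (a : Fin n → ℝ) : Fin n → ℝ :=
  fun i => if i ∈ argmaxSet a then (1 : ℝ) / (argmaxSet a).card else 0

def softmaxCols {n m : ℕ} (A : Matrix (Fin n) (Fin m) ℝ) : Matrix (Fin n) (Fin m) ℝ :=
  Matrix.of fun i k => softmax (fun j => A j k) i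

def hardmaxCols {n m : ℕ} (A : Matrix (Fin n) (Fin m) ℝ) : Matrix (Fin n) (Fin m) ℝ :=
  Matrix.of fun i k => hardmax (fun j => A j k) i

def attnS {d n s : ℕ} (WO : Matrix (Fin d) (Fin s) ℝ)
    (WV WK WQ : Matrix (Fin s) (Fin d) ℝ) (Z : Matrix (Fin d) (Fin n) ℝ) :
    Matrix (Fin d) (Fin n) ℝ :=
  Z + WO * (WV * Z) * softmaxCols ((WK * Z)ᵀ * (WQ * Z))

def attnH {d n s h : ℕ} (WO : Fin h → Matrix (Fin d) (Fin s) ℝ)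
    (WV WK WQ : Fin h → Matrix (Fin s) (Fin d) ℝ) (Z : Matrix (Fin d) (Fin n) ℝ) :
    Matrix (Fin d) (Fin n) ℝ :=
  Z + ∑ i, WO i * (WV i * Z) * hardmaxCols ((WK i * Z)ᵀ * (WQ i * Z))

def l2norm {d : ℕ} (x : Fin d → ℝ) : ℝ := Real.sqrt (∑ t, (x t) ^ 2)

def TokSep {d n N : ℕ} (rmin rmax δ : ℝ) (X : Fin N → Matrix (Fin d) (Fin n) ℝ) : Prop :=
  (∀ i k, rmin < l2norm (fun t => X i t k)) ∧
  (∀ i k, l2norm (fun t => X i t k) < rmax) ∧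
  (∀ i j k l, (fun t => X i t k) ≠ (fun t => X j t l) →
    δ < l2norm (fun t => X i t k - X j t l))

def vocab {d n : ℕ} (X : Matrix (Fin d) (Fin n) ℝ) : Finset (Fin d → ℝ) :=
  Finset.image (fun k => (fun t => X t k)) Finset.univ

def ContextualMapping {d n N : ℕ} (X : Fin N → Matrix (Fin d) (Fin n) ℝ)
    (q : Matrix (Fin d) (Fin n) ℝ → Matrix (Fin d) (Fin n) ℝ) (r δ : ℝ) : Prop :=
  (∀ i k, l2norm (fun t => q (X i) t k) < r) ∧
  (∀ i j k l, (vocab (X i) ≠ vocab (X j) ∨ (fun t => X i t k) ≠ (fun t => X j t l)) →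
    δ < l2norm (fun t => q (X i) t k - q (X j) t l))

def ffn {d n q : ℕ} (W1 : Matrix (Fin q) (Fin d) ℝ) (W2 : Matrix (Fin d) (Fin q) ℝ)
    (b1 : Fin q → ℝ) (b2 : Fin d → ℝ) (H : Matrix (Fin d) (Fin n) ℝ) :
    Matrix (Fin d) (Fin n) ℝ :=
  Matrix.of fun t k =>
    H t k + W2.mulVec (fun u => max 0 (W1.mulVec (fun t' => H t' k) u + b1 u)) t + b2 t

def logSumExp {n : ℕ} (a : Fin n → ℝ) : ℝ := Real.log (∑ i, Real.exp (a i))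

def entS {n : ℕ} (p : Fin n → ℝ) : ℝ := -∑ i, p i * Real.log (p i)


private lemma aux_exp_mono (x y : ℝ) (hx : 1 ≤ x) (hxy : x ≤ y) :
    y * Real.exp (-y) ≤ x * Real.exp (-x) := by
  have h1 : y ≤ x * Real.exp (y - x) := by
    have h2 := Real.add_one_le_exp (y - x)
    nlinarith [Real.exp_pos (y - x)]
  have h3 : Real.exp (y - x) * Real.exp (-y) = Real.exp (-x) := by
    rw [← Real.exp_add]; ring_nf
  have h4 := mul_le_mul_of_nonneg_right h1 (Real.exp_pos (-y)).le
  calc y * Real.exp (-y) ≤ x * Real.exp (y - x) * Real.exp (-y) := h4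
    _ = x * Real.exp (-x) := by rw [mul_assoc, h3]

private lemma aux_geom (r : ℝ) (h0 : 0 ≤ r) (h1 : r < 1) (N : ℕ) :
    ∑ m ∈ Finset.range N, r ^ m ≤ 1 / (1 - r) := by
  rw [geom_sum_eq (by linarith : r ≠ 1)]
  have h3 : 0 < 1 - r := by linarith
  have h4 : (0:ℝ) ≤ r ^ N := by positivity
  rw [show (r ^ N - 1) / (r - 1) = (1 - r ^ N) / (1 - r) by
    rw [← neg_div_neg_eq]; ring_nf]
  rw [div_le_div_iff₀ h3 h3]
  nlinarith

private lemma aux_master (q : ℝ) (h0 : 0 ≤ q) (h1 : q ≤ 1/4) (N : ℕ) :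
    ∑ m ∈ Finset.range N, (1 + m : ℝ) * q ^ (m + 1) ≤ 2 * q := by
  have key : ∀ m : ℕ, (1 + m : ℝ) * q ^ (m + 1) ≤ q * (2 * q) ^ m := by
    intro m
    have hm : (1 + m : ℝ) ≤ 2 ^ m := by
      have := Nat.lt_two_pow_self (n := m)
      exact_mod_cast Nat.one_add_le_iff.mpr this
    have hq : (0:ℝ) ≤ q ^ m := by positivity
    calc (1 + m : ℝ) * q ^ (m + 1) = q * ((1 + m) * q ^ m) := by ring
      _ ≤ q * (2 ^ m * q ^ m) := by
          apply mul_le_mul_of_nonneg_left _ h0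
          exact mul_le_mul_of_nonneg_right hm hq
      _ = q * (2 * q) ^ m := by rw [mul_pow]
  calc ∑ m ∈ Finset.range N, (1 + m : ℝ) * q ^ (m + 1)
      ≤ ∑ m ∈ Finset.range N, q * (2 * q) ^ m := Finset.sum_le_sum fun m _ => key m
    _ = q * ∑ m ∈ Finset.range N, (2 * q) ^ m := by rw [Finset.mul_sum]
    _ ≤ q * (1 / (1 - 2 * q)) := by
        apply mul_le_mul_of_nonneg_left _ h0
        exact aux_geom _ (by linarith) (by linarith) N
    _ ≤ 2 * q := by
        rw [mul_one_div, div_le_iff₀ (by linarith)]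
        nlinarith

private lemma aux_geom_le (q : ℝ) (h0 : 0 ≤ q) (h1 : q ≤ 1/4) (N : ℕ) :
    ∑ m ∈ Finset.range N, q ^ m ≤ 1 + 2 * q := by
  refine le_trans (aux_geom q h0 (by linarith) N) ?_
  rw [div_le_iff₀ (by linarith)]
  nlinarith

private lemma aux_ST {n : ℕ} {δ : ℝ} (hδ : 3 ≤ δ) {c : Fin n → ℝ} (z : Fin n)
    (hz : z.val = 0)
    (hchain : ∀ i : Fin n, (i.val : ℝ) * δ ≤ c z - c i) :
    (∑ i, Real.exp (c i - c z) ≤ 1 + 2 * Real.exp (-δ)) ∧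
    (0 ≤ ∑ i, (c z - c i) * Real.exp (c i - c z)) ∧
    (∑ i, (c z - c i) * Real.exp (c i - c z) ≤ 2 * δ * Real.exp (-δ)) := by
  set q := Real.exp (-δ) with hq
  have hq0 : 0 < q := Real.exp_pos _
  have hq4 : q ≤ 1/4 := by
    have h1 := Real.add_one_le_exp (3:ℝ)
    have h2 : q ≤ Real.exp (-3:ℝ) := Real.exp_le_exp.mpr (by linarith)
    have h4 : Real.exp (-3:ℝ) * Real.exp (3:ℝ) = 1 := by rw [← Real.exp_add]; norm_num
    nlinarith [Real.exp_pos (-3:ℝ)]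
  have hqpow : ∀ m : ℕ, Real.exp (-((m:ℝ) * δ)) = q ^ m := by
    intro m
    rw [hq, ← Real.exp_nat_mul]
    congr 1; push_cast; ring
  refine ⟨?_, ?_, ?_⟩
  · calc ∑ i, Real.exp (c i - c z) ≤ ∑ i : Fin n, q ^ (i.val) := by
          apply Finset.sum_le_sum
          intro i _
          rw [← hqpow i.val]
          apply Real.exp_le_exp.mpr
          linarith [hchain i]
      _ = ∑ m ∈ Finset.range n, q ^ m := Fin.sum_univ_eq_sum_range _ _
      _ ≤ 1 + 2 * q := aux_geom_le q hq0.le hq4 n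
  · apply Finset.sum_nonneg
    intro i _
    have h1 : (0:ℝ) ≤ (i.val : ℝ) * δ := by positivity
    have h2 : 0 ≤ c z - c i := le_trans h1 (hchain i)
    positivity
  · calc (∑ i, (c z - c i) * Real.exp (c i - c z))
        ≤ ∑ i : Fin n, ((i.val : ℝ) * δ) * q ^ (i.val) := by
          apply Finset.sum_le_sum
          intro i _
          by_cases h0 : i.val = 0
          · have hiz : i = z := Fin.ext (by rw [h0, hz])
            rw [hiz]; simp [hz]
          · have hx1 : (1:ℝ) ≤ (i.val:ℝ) * δ := by
              have h5 : (1:ℝ) ≤ (i.val:ℝ) := by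
                exact_mod_cast Nat.one_le_iff_ne_zero.mpr h0
              nlinarith
            have hmono := aux_exp_mono _ _ hx1 (hchain i)
            have heq : Real.exp (c i - c z) = Real.exp (-(c z - c i)) := by ring_nf
            rw [heq, ← hqpow i.val]
            exact hmono
      _ = ∑ m ∈ Finset.range n, ((m:ℝ) * δ) * q ^ m :=
          Fin.sum_univ_eq_sum_range (fun m => ((m:ℝ) * δ) * q ^ m) n
      _ ≤ 2 * δ * q := by
          cases n with
          | zero => simp; positivity
          | succ N =>
            rw [Finset.sum_range_succ']
            have h3 : ∑ m ∈ Finset.range N, (((m + 1 : ℕ):ℝ) * δ) * q ^ (m + 1)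
                = δ * ∑ m ∈ Finset.range N, (1 + m : ℝ) * q ^ (m + 1) := by
              rw [Finset.mul_sum]
              exact Finset.sum_congr rfl fun m _ => by push_cast; ring
            have h2 := aux_master q hq0.le hq4 N
            rw [h3]
            simp only [Nat.cast_zero, zero_mul, pow_zero, mul_one, add_zero]
            nlinarith

private lemma aux_S_lb {n : ℕ} (c : Fin n → ℝ) (z : Fin n) :
    1 ≤ ∑ i, Real.exp (c i - c z) := by
  have h := Finset.single_le_sum (f := fun i => Real.exp (c i - c z))
    (fun i _ => (Real.exp_pos _).le) (Finset.mem_univ z)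
  simpa using h
private lemma aux_chain {n : ℕ} {δ : ℝ} {c : Fin n → ℝ}
    (hgap : ∀ i j : Fin n, i < j → δ < c i - c j) (K : Fin n) :
    ∀ (m : ℕ) (h : K.val + m < n), (m : ℝ) * δ ≤ c K - c ⟨K.val + m, h⟩ := by
  intro m
  induction m with
  | zero =>
    intro h
    have : (⟨K.val + 0, h⟩ : Fin n) = K := by ext; simp
    rw [this]; simp
  | succ m ih =>
    intro h
    have h' : K.val + m < n := by omega
    have hlt : (⟨K.val + m, h'⟩ : Fin n) < ⟨K.val + (m + 1), h⟩ := by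
      simp [Fin.lt_def]
    have h1 := hgap _ _ hlt
    have h2 := ih h'
    push_cast
    linarith

private lemma aux_chainK {n : ℕ} {δ : ℝ} {c : Fin n → ℝ}
    (hgap : ∀ i j : Fin n, i < j → δ < c i - c j) (K : Fin n)
    (i : Fin n) (hKi : K ≤ i) :
    ((i.val - K.val : ℕ) : ℝ) * δ ≤ c K - c i := by
  have hKi' : K.val ≤ i.val := hKi
  have h : K.val + (i.val - K.val) < n := by omega
  have h2 := aux_chain hgap K (i.val - K.val) h
  have : (⟨K.val + (i.val - K.val), h⟩ : Fin n) = i := by ext; simp; omega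
  rwa [this] at h2

private lemma aux_prefix {n : ℕ} (f : Fin n → ℝ) (k : Fin n)
    (h0 : ∀ i : Fin n, i < k → f i = 0) :
    ∑ i, f i = ∑ i ∈ Finset.univ.filter (fun i => k ≤ i), f i := by
  symm
  apply Finset.sum_subset (Finset.filter_subset _ _)
  intro i _ hi
  apply h0
  simp only [Finset.mem_filter, Finset.mem_univ, true_and] at hi
  exact lt_of_not_ge hi

private lemma aux_tail_sum {n : ℕ} (h : Fin n → ℝ) (g : ℕ → ℝ) (k : Fin n)
    (hg0 : ∀ m, 0 ≤ g m)
    (hbound : ∀ i : Fin n, k ≤ i → h i ≤ g (i.val - k.val)) :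
    ∑ i ∈ Finset.univ.filter (fun i => k ≤ i), h i ≤ ∑ m ∈ Finset.range n, g m := by
  set P := Finset.univ.filter (fun i : Fin n => k ≤ i) with hP
  have step1 : ∑ i ∈ P, h i ≤ ∑ i ∈ P, g (i.val - k.val) := by
    apply Finset.sum_le_sum
    intro i hi
    simp only [hP, Finset.mem_filter, Finset.mem_univ, true_and] at hi
    exact hbound i hi
  have hinj : ∀ x ∈ P, ∀ y ∈ P, x.val - k.val = y.val - k.val → x = y := by
    intro x hx y hy hxy
    simp only [hP, Finset.mem_filter, Finset.mem_univ, true_and] at hx hy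
    have hx' : k.val ≤ x.val := hx
    have hy' : k.val ≤ y.val := hy
    ext
    omega
  have step2 : ∑ i ∈ P, g (i.val - k.val) = ∑ m ∈ P.image (fun i => i.val - k.val), g m :=
    (Finset.sum_image hinj).symm
  have step3 : P.image (fun i => i.val - k.val) ⊆ Finset.range n := by
    intro m hm
    simp only [Finset.mem_image] at hm
    obtain ⟨i, _, hi⟩ := hm
    rw [Finset.mem_range]
    omega
  have step4 := Finset.sum_le_sum_of_subset_of_nonneg step3 (fun m _ _ => hg0 m)
  linarith

private lemma aux_boltz {n : ℕ} (c : Fin n → ℝ) (z : Fin n) :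
    boltz c = c z - (∑ i, (c z - c i) * Real.exp (c i - c z)) / (∑ i, Real.exp (c i - c z)) := by
  have hS0 : (0:ℝ) < ∑ j, Real.exp (c j) :=
    Finset.sum_pos (fun i _ => Real.exp_pos _) ⟨z, Finset.mem_univ z⟩
  have hrel : ∀ i : Fin n, Real.exp (c i - c z) = Real.exp (c i) * Real.exp (-c z) := by
    intro i; rw [← Real.exp_add]; ring_nf
  have hD : (∑ i, Real.exp (c i - c z)) = Real.exp (-c z) * ∑ j, Real.exp (c j) := by
    rw [Finset.mul_sum]
    exact Finset.sum_congr rfl fun i _ => by rw [hrel i]; ring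
  have hN : (∑ i, (c z - c i) * Real.exp (c i - c z))
      = Real.exp (-c z) * ∑ i, (c z - c i) * Real.exp (c i) := by
    rw [Finset.mul_sum]
    exact Finset.sum_congr rfl fun i _ => by rw [hrel i]; ring
  have hsum : (∑ i, (c z - c i) * Real.exp (c i))
      = c z * (∑ j, Real.exp (c j)) - ∑ i, c i * Real.exp (c i) := by
    rw [Finset.mul_sum, ← Finset.sum_sub_distrib]
    exact Finset.sum_congr rfl fun i _ => by ring
  have hb : boltz c = (∑ i, c i * Real.exp (c i)) / (∑ j, Real.exp (c j)) := by
    unfold boltz softmax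
    rw [Finset.sum_div]
    exact Finset.sum_congr rfl fun i _ => by rw [mul_div_assoc]
  rw [hb, hD, hN, hsum]
  have hez : Real.exp (-c z) ≠ 0 := (Real.exp_pos _).ne'
  field_simp
  ring


set_option maxHeartbeats 1000000 in
theorem statement14 (n : ℕ) (hn : 2 ≤ n) (δ : ℝ) (hδ : 2 * Real.log n + 3 < δ)
    (a b : Fin n → ℝ)
    (hagap : ∀ i j : Fin n, i < j → δ < a i - a j)
    (hbgap : ∀ i j : Fin n, i < j → δ < b i - b j)
    (hsep : ∀ i j : Fin n, a i ≠ b j → δ < |a i - b j|)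
    (k : Fin n)
    (hpre : ∀ i : Fin n, i < k → a i = b i)
    (hk : b k < a k) :
    (Real.log n) ^ 2 * Real.exp (-(a ⟨0, by omega⟩ - b k)) < |boltz a - boltz b| := by
  have hn' : (2:ℝ) ≤ (n:ℝ) := by exact_mod_cast hn
  have hn1 : (1:ℝ) < (n:ℝ) := by linarith
  have hnpos : (0:ℝ) < (n:ℝ) := by linarith
  have hlog0 : 0 < Real.log n := Real.log_pos hn1
  have hδ3 : 3 < δ := by linarith
  have hδ0 : 0 < δ := by linarith
  set z : Fin n := ⟨0, by omega⟩ with hzdef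
  show (Real.log n) ^ 2 * Real.exp (-(a z - b k)) < |boltz a - boltz b|
  set q := Real.exp (-δ) with hqdef
  have hq0 : 0 < q := Real.exp_pos _
  clear_value q
  have he3 : Real.exp (-3 : ℝ) ≤ 1/20 := by
    have h1 : Real.exp (3:ℝ) = Real.exp 1 ^ (3:ℕ) := by
      rw [← Real.exp_nat_mul]; norm_num
    have h2 := Real.exp_one_gt_d9
    have h3 : (20:ℝ) ≤ Real.exp 3 := by
      rw [h1]
      have h2' : (2.7182818283:ℝ) ≤ Real.exp 1 := le_of_lt h2
      have h2'' := pow_le_pow_left₀ (by norm_num : (0:ℝ) ≤ 2.7182818283) h2' 3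
      nlinarith
    have h4 : Real.exp (-3:ℝ) * Real.exp (3:ℝ) = 1 := by
      rw [← Real.exp_add]; norm_num
    nlinarith [Real.exp_pos (-3:ℝ)]
  have hqe3 : q ≤ Real.exp (-3:ℝ) := by
    rw [hqdef]; exact Real.exp_le_exp.mpr (by linarith)
  have hq20 : q ≤ 1/20 := le_trans hqe3 he3
  have hq4 : q ≤ 1/4 := by linarith
  have hexplog : Real.exp (2 * Real.log n) = (n:ℝ)^2 := by
    rw [two_mul, Real.exp_add, Real.exp_log hnpos]; ring
  have hqn : (n:ℝ)^2 * q < Real.exp (-3:ℝ) := by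
    have h2 : q < Real.exp (-(2*Real.log n + 3)) := by
      rw [hqdef]; exact Real.exp_lt_exp.mpr (by linarith)
    have h5 : Real.exp (-(2*Real.log n + 3))
        = Real.exp (-3:ℝ) * (Real.exp (2*Real.log n))⁻¹ := by
      rw [← Real.exp_neg, ← Real.exp_add]; ring_nf
    rw [h5, hexplog] at h2
    have h6 : (0:ℝ) < (n:ℝ)^2 := by positivity
    calc (n:ℝ)^2 * q < (n:ℝ)^2 * (Real.exp (-3:ℝ) * ((n:ℝ)^2)⁻¹) :=
          mul_lt_mul_of_pos_left h2 h6
      _ = Real.exp (-3:ℝ) := by field_simp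
  have hlogsq : (Real.log n)^2 ≤ (n:ℝ)^2 := by
    have h1 := Real.log_le_sub_one_of_pos hnpos
    nlinarith
  have hzle : ∀ i : Fin n, z ≤ i := fun i => by
    simp [hzdef, Fin.le_def]
  have hca : ∀ i : Fin n, (i.val:ℝ) * δ ≤ a z - a i := by
    intro i
    have h := aux_chainK hagap z i (hzle i)
    simpa [hzdef] using h
  have hcb : ∀ i : Fin n, (i.val:ℝ) * δ ≤ b z - b i := by
    intro i
    have h := aux_chainK hbgap z i (hzle i)
    simpa [hzdef] using h
  set Sa := ∑ i, Real.exp (a i - a z) with hSadef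
  set Ta := ∑ i, (a z - a i) * Real.exp (a i - a z) with hTadef
  set Sb := ∑ i, Real.exp (b i - b z) with hSbdef
  set Tb := ∑ i, (b z - b i) * Real.exp (b i - b z) with hTbdef
  have hba : boltz a = a z - Ta / Sa := aux_boltz a z
  have hbb : boltz b = b z - Tb / Sb := aux_boltz b z
  have hSa1 : 1 ≤ Sa := aux_S_lb a z
  have hSb1 : 1 ≤ Sb := aux_S_lb b z
  have hz0 : z.val = 0 := rfl
  obtain ⟨hSaU, hTa0, hTaU⟩ := aux_ST (le_of_lt hδ3) z hz0 hca
  obtain ⟨hSbU, hTb0, hTbU⟩ := aux_ST (le_of_lt hδ3) z hz0 hcb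
  rw [← hqdef] at hSaU hTaU hSbU hTbU
  rw [← hSadef] at hSaU
  rw [← hTadef] at hTa0 hTaU
  rw [← hSbdef] at hSbU
  rw [← hTbdef] at hTb0 hTbU
  clear_value Sa Ta Sb Tb
  have hTa_small : Ta ≤ (1/10) * δ := by
    have h1 : (2*δ) * q ≤ (2*δ) * (1/20) := mul_le_mul_of_nonneg_left hq20 (by linarith)
    calc Ta ≤ 2 * δ * q := hTaU
      _ ≤ (2*δ) * (1/20) := by linarith only [h1]
      _ = (1/10) * δ := by ring
  have hTb_small : Tb ≤ (1/10) * δ := by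
    have h1 : (2*δ) * q ≤ (2*δ) * (1/20) := mul_le_mul_of_nonneg_left hq20 (by linarith)
    calc Tb ≤ 2 * δ * q := hTbU
      _ ≤ (2*δ) * (1/20) := by linarith only [h1]
      _ = (1/10) * δ := by ring
  rcases Nat.eq_zero_or_pos k.val with hk0 | hk1
  · -- case k = z
    have hkz : k = z := Fin.ext (by rw [hk0, hz0])
    rw [hkz] at hk
    have h1 := hsep z z (ne_of_gt hk)
    rw [abs_of_pos (by linarith : (0:ℝ) < a z - b z)] at h1
    have hdiff : boltz a - boltz b = (a z - b z) - Ta/Sa + Tb/Sb := by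
      rw [hba, hbb]; ring
    have hTaS : Ta/Sa ≤ Ta := div_le_self hTa0 hSa1
    have hTaS0 : 0 ≤ Ta/Sa := div_nonneg hTa0 (by linarith)
    have hTbS : 0 ≤ Tb/Sb := div_nonneg hTb0 (by linarith)
    have hpos : 0 < boltz a - boltz b := by
      rw [hdiff]
      linarith only [h1, hTaS, hTaS0, hTbS, hTa_small, hδ3]
    rw [hkz, abs_of_pos hpos]
    have hExp : Real.exp (-(a z - b z)) ≤ q := by
      rw [hqdef]; exact Real.exp_le_exp.mpr (by linarith)
    have hLHS : (Real.log n)^2 * Real.exp (-(a z - b z)) ≤ (n:ℝ)^2 * q :=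
      mul_le_mul hlogsq hExp (Real.exp_pos _).le (by positivity)
    have hRHS : (9/10) * δ ≤ boltz a - boltz b := by
      rw [hdiff]
      linarith only [h1, hTaS, hTa_small, hTbS]
    linarith only [hLHS, hRHS, hqn, he3, hδ3]
  · -- case 1 ≤ k.val
    have hzk : z < k := by
      rw [Fin.lt_def, hz0]; exact hk1
    have hM : b z = a z := (hpre z hzk).symm
    have hd1 : (1:ℝ) ≤ (k.val:ℝ) := by exact_mod_cast hk1
    have hdδ : δ ≤ a z - a k := by
      have h := hca k
      have h2 : δ ≤ (k.val:ℝ) * δ := le_mul_of_one_le_left hδ0.le hd1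
      linarith
    set d := a z - a k with hddef
    have hd3 : 3 < d := by linarith
    have hd0 : 0 < d := by linarith
    set E := Real.exp (-d) with hEdef
    have hE0 : 0 < E := Real.exp_pos _
    clear_value d E
    have hdE0 : 0 < d * E := mul_pos hd0 hE0
    have hsepk : δ < a k - b k := by
      have h1 := hsep k k (ne_of_gt hk)
      rwa [abs_of_pos (by linarith)] at h1
    set P := Finset.univ.filter (fun i : Fin n => k ≤ i) with hPdef
    have hkP : k ∈ P := by simp [hPdef]
    have hEq : ∀ m : ℕ, Real.exp (-(d + (1 + (m:ℝ)) * δ)) = E * q ^ (m+1) := by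
      intro m
      rw [hEdef, hqdef, ← Real.exp_nat_mul, ← Real.exp_add]
      congr 1; push_cast; ring
    have hEqm : ∀ m : ℕ, Real.exp (-(d + (m:ℝ) * δ)) = E * q ^ m := by
      intro m
      rw [hEdef, hqdef, ← Real.exp_nat_mul, ← Real.exp_add]
      congr 1; push_cast; ring
    -- (1) T bound
    have hTsub : Ta - Tb = ∑ i ∈ P,
        ((a z - a i) * Real.exp (a i - a z) - (b z - b i) * Real.exp (b i - b z)) := by
      rw [hTadef, hTbdef, ← Finset.sum_sub_distrib]
      exact aux_prefix _ k (fun i hik => by rw [hpre i hik, hM]; ring)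
    have hgak : (a z - a k) * Real.exp (a k - a z) = d * E := by
      rw [hEdef, hddef, show a k - a z = -(a z - a k) by ring]
    have hgaP : ∀ i ∈ P, 0 ≤ (a z - a i) * Real.exp (a i - a z) := by
      intro i _
      have h1 : (0:ℝ) ≤ (i.val:ℝ) * δ := by positivity
      have h2 : 0 ≤ a z - a i := le_trans h1 (hca i)
      positivity
    have hgak_le : d * E ≤ ∑ i ∈ P, (a z - a i) * Real.exp (a i - a z) := by
      rw [← hgak]
      exact Finset.single_le_sum hgaP hkP
    have hgbP : ∑ i ∈ P, (b z - b i) * Real.exp (b i - b z) ≤ ((d + δ) * E) * (2 * q) := by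
      have htail := aux_tail_sum (fun i => (b z - b i) * Real.exp (b i - b z))
        (fun m => ((d + δ) * E) * ((1 + (m:ℝ)) * q ^ (m+1))) k
        (fun m => by
          have h1 : (0:ℝ) ≤ d + δ := by linarith only [hδ0, hdδ]
          have h2 : (0:ℝ) ≤ (1 + (m:ℝ)) * q ^ (m+1) :=
            mul_nonneg (by positivity) (pow_nonneg hq0.le _)
          exact mul_nonneg (mul_nonneg h1 hE0.le) h2)
        ?_
      · refine le_trans htail ?_
        rw [← Finset.mul_sum]
        have h2 := aux_master q hq0.le hq4 n
        have h3 : (0:ℝ) ≤ (d + δ) * E := mul_nonneg (by linarith only [hδ0, hdδ]) hE0.le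
        exact mul_le_mul_of_nonneg_left h2 h3
      · intro i hki
        have hchain_bk := aux_chainK hbgap k i hki
        set m : ℕ := i.val - k.val with hmdef
        have hmδ : (0:ℝ) ≤ (m:ℝ) * δ := mul_nonneg (Nat.cast_nonneg m) hδ0.le
        have hu : d + (1 + (m:ℝ)) * δ ≤ b z - b i := by
          rw [hM]
          linarith only [hchain_bk, hsepk, hddef]
        have hx1 : (1:ℝ) ≤ d + (1 + (m:ℝ)) * δ := by linarith only [hmδ, hd3, hδ0]
        have hmono := aux_exp_mono _ _ hx1 hu
        show (b z - b i) * Real.exp (b i - b z) ≤ (d + δ) * E * ((1 + (m:ℝ)) * q ^ (m + 1))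
        have heq2 : Real.exp (b i - b z) = Real.exp (-(b z - b i)) := by ring_nf
        rw [heq2]
        refine le_trans hmono ?_
        rw [hEq m]
        have h7 : d + (1 + (m:ℝ)) * δ ≤ (d + δ) * (1 + (m:ℝ)) := by
          have hmd : (0:ℝ) ≤ (m:ℝ) * d := mul_nonneg (Nat.cast_nonneg m) hd0.le
          linarith only [hmd]
        have h8 : (0:ℝ) ≤ E * q ^ (m+1) := mul_nonneg hE0.le (pow_nonneg hq0.le _)
        calc (d + (1 + (m:ℝ)) * δ) * (E * q ^ (m+1))
            ≤ ((d + δ) * (1 + (m:ℝ))) * (E * q ^ (m+1)) :=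
              mul_le_mul_of_nonneg_right h7 h8
          _ = ((d + δ) * E) * ((1 + (m:ℝ)) * q ^ (m+1)) := by ring
    have hp2 : ((d + δ) * E) * (2 * q) ≤ (1/5) * (d * E) := by
      have s1 : (d + δ) * E ≤ (d + d) * E :=
        mul_le_mul_of_nonneg_right (by linarith only [hdδ]) hE0.le
      have s2 : ((d + δ) * E) * (2 * q) ≤ ((d + d) * E) * (2 * q) :=
        mul_le_mul_of_nonneg_right s1 (by linarith only [hq0])
      have s3 : ((d + d) * E) * (2 * q) = (4 * q) * (d * E) := by ring
      have s4 : (4 * q) * (d * E) ≤ (4 * (1/20)) * (d * E) :=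
        mul_le_mul_of_nonneg_right (by linarith only [hq20]) hdE0.le
      calc ((d + δ) * E) * (2 * q) ≤ ((d + d) * E) * (2 * q) := s2
        _ = (4 * q) * (d * E) := s3
        _ ≤ (4 * (1/20)) * (d * E) := s4
        _ = (1/5) * (d * E) := by ring
    have hTab : (8/10) * (d * E) ≤ Ta - Tb := by
      have h9 : Ta - Tb = (∑ i ∈ P, (a z - a i) * Real.exp (a i - a z))
          - ∑ i ∈ P, (b z - b i) * Real.exp (b i - b z) := by
        rw [hTsub, Finset.sum_sub_distrib]
      rw [h9]
      linarith only [hgak_le, hgbP, hp2]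
    -- (2) S bound
    have hSsub : Sb - Sa = ∑ i ∈ P, (Real.exp (b i - b z) - Real.exp (a i - a z)) := by
      rw [hSbdef, hSadef, ← Finset.sum_sub_distrib]
      exact aux_prefix _ k (fun i hik => by rw [hpre i hik, hM]; ring)
    have habs : |Sb - Sa| ≤ (1 + 4*q) * E := by
      rw [hSsub]
      refine le_trans (Finset.abs_sum_le_sum_abs _ _) ?_
      have htail := aux_tail_sum (fun i => |Real.exp (b i - b z) - Real.exp (a i - a z)|)
        (fun m => E * q ^ m + E * q ^ (m+1)) k
        (fun m => add_nonneg (mul_nonneg hE0.le (pow_nonneg hq0.le _))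
          (mul_nonneg hE0.le (pow_nonneg hq0.le _)))
        ?_
      · refine le_trans htail ?_
        rw [Finset.sum_add_distrib, ← Finset.mul_sum, ← Finset.mul_sum]
        have g1 : ∑ m ∈ Finset.range n, q ^ m ≤ 1 + 2*q := aux_geom_le q hq0.le hq4 n
        have g2 : ∑ m ∈ Finset.range n, q ^ (m+1) = q * ∑ m ∈ Finset.range n, q ^ m := by
          rw [Finset.mul_sum]
          exact Finset.sum_congr rfl fun m _ => by ring
        have g3 : (0:ℝ) ≤ ∑ m ∈ Finset.range n, q ^ m :=
          Finset.sum_nonneg fun m _ => pow_nonneg hq0.le _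
        rw [g2]
        have c1 : E * (∑ m ∈ Finset.range n, q ^ m) ≤ E * (1 + 2*q) :=
          mul_le_mul_of_nonneg_left g1 hE0.le
        have c2 : q * (∑ m ∈ Finset.range n, q ^ m) ≤ q * (1 + 2*q) :=
          mul_le_mul_of_nonneg_left g1 hq0.le
        have c2'' : 2 * q * q ≤ 2 * q * (1/4) :=
          mul_le_mul_of_nonneg_left hq4 (by linarith only [hq0])
        have c2' : q * (1 + 2*q) ≤ 2 * q := by linarith only [c2'', hq0]
        have c3 : E * (q * (∑ m ∈ Finset.range n, q ^ m)) ≤ E * (2 * q) :=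
          mul_le_mul_of_nonneg_left (le_trans c2 c2') hE0.le
        have c4 : E * (1 + 2*q) + E * (2*q) = (1 + 4*q) * E := by ring
        linarith only [c1, c3, c4]
      · intro i hki
        have hchain_ak := aux_chainK hagap k i hki
        have hchain_bk := aux_chainK hbgap k i hki
        set m : ℕ := i.val - k.val with hmdef
        show |Real.exp (b i - b z) - Real.exp (a i - a z)| ≤ E * q ^ m + E * q ^ (m + 1)
        have hua : Real.exp (a i - a z) ≤ E * q ^ m := by
          rw [← hEqm m]
          apply Real.exp_le_exp.mpr
          linarith only [hchain_ak, hddef]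
        have hub : Real.exp (b i - b z) ≤ E * q ^ (m+1) := by
          rw [← hEq m, hM]
          apply Real.exp_le_exp.mpr
          linarith only [hchain_bk, hsepk, hddef]
        have hpa := Real.exp_pos (a i - a z)
        have hpb := Real.exp_pos (b i - b z)
        have hA : (0:ℝ) ≤ E * q ^ m := mul_nonneg hE0.le (pow_nonneg hq0.le _)
        have hB : (0:ℝ) ≤ E * q ^ (m+1) := mul_nonneg hE0.le (pow_nonneg hq0.le _)
        rw [abs_le]
        constructor
        · linarith only [hua, hub, hpa, hpb, hA, hB]
        · linarith only [hua, hub, hpa, hpb, hA, hB]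
    -- (3) assembly
    have hTb20 : Tb ≤ (1/10) * d := by linarith only [hTb_small, hdδ]
    have hSa0 : (0:ℝ) < Sa := by linarith only [hSa1]
    have hSb0 : (0:ℝ) < Sb := by linarith only [hSb1]
    have hX : Ta/Sa - Tb/Sb = ((Ta - Tb) * Sb + Tb * (Sb - Sa)) / (Sa * Sb) := by
      field_simp
      ring
    have habs' := neg_abs_le (Sb - Sa)
    have hnum : (6/10) * (d * E) ≤ (Ta - Tb) * Sb + Tb * (Sb - Sa) := by
      have h1 : (8/10) * (d * E) ≤ (Ta - Tb) * Sb := by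
        have e1 : Ta - Tb ≤ (Ta - Tb) * Sb :=
          le_mul_of_one_le_right (by linarith only [hTab, hdE0]) hSb1
        linarith only [e1, hTab]
      have h2 : Tb * (-((1 + 4*q) * E)) ≤ Tb * (Sb - Sa) :=
        mul_le_mul_of_nonneg_left (by linarith only [habs', habs]) hTb0
      have h3 : Tb * ((1 + 4*q) * E) ≤ ((1/10) * d) * ((1 + 4*q) * E) := by
        apply mul_le_mul_of_nonneg_right hTb20
        have : (0:ℝ) ≤ 1 + 4*q := by linarith only [hq0]
        exact mul_nonneg this hE0.le
      have h4 : ((1/10) * d) * ((1 + 4*q) * E) ≤ ((1/10) * d) * ((12/10) * E) := by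
        apply mul_le_mul_of_nonneg_left _ (by linarith only [hd0] : (0:ℝ) ≤ (1/10) * d)
        exact mul_le_mul_of_nonneg_right (by linarith only [hq20]) hE0.le
      have h5 : ((1/10) * d) * ((12/10) * E) = (12/100) * (d * E) := by ring
      linarith only [h1, h2, h3, h4, h5, hdE0]
    have hSab : Sa * Sb ≤ 5/4 := by
      have s1 : Sa ≤ 11/10 := by linarith only [hSaU, hq20]
      have s2 : Sb ≤ 11/10 := by linarith only [hSbU, hq20]
      have s3 : Sa * Sb ≤ (11/10) * (11/10) :=
        mul_le_mul s1 s2 (by linarith only [hSb1]) (by norm_num)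
      linarith only [s3]
    have hXlb : (48/100) * (d * E) ≤ Ta/Sa - Tb/Sb := by
      rw [hX, le_div_iff₀ (mul_pos hSa0 hSb0)]
      have h6 : (48/100) * (d * E) * (Sa * Sb) ≤ (48/100) * (d * E) * (5/4) := by
        apply mul_le_mul_of_nonneg_left hSab
        linarith only [hdE0]
      linarith only [hnum, h6]
    have hXpos : 0 < Ta/Sa - Tb/Sb := by
      have hh : 0 < (48/100) * (d * E) := by linarith only [hdE0]
      linarith only [hh, hXlb]
    have hdiff : boltz a - boltz b = -(Ta/Sa - Tb/Sb) := by
      rw [hba, hbb, hM]; ring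
    rw [hdiff, abs_neg, abs_of_pos hXpos]
    have hexp_e : Real.exp (-(a z - b k)) ≤ E * q := by
      rw [hEdef, hqdef, ← Real.exp_add]
      apply Real.exp_le_exp.mpr
      have hh : a z - b k = d + (a k - b k) := hddef ▸ by ring
      linarith only [hh, hsepk]
    have hLHS : (Real.log n)^2 * Real.exp (-(a z - b k)) ≤ (n:ℝ)^2 * (E * q) :=
      mul_le_mul hlogsq hexp_e (Real.exp_pos _).le (by positivity)
    have f1 : (n:ℝ)^2 * (E * q) ≤ (1/20) * E := by
      have t1 : (n:ℝ)^2 * q ≤ 1/20 := le_trans hqn.le he3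
      calc (n:ℝ)^2 * (E * q) = ((n:ℝ)^2 * q) * E := by ring
        _ ≤ (1/20) * E := mul_le_mul_of_nonneg_right t1 hE0.le
    have f2 : (48/100) * (3 * E) ≤ (48/100) * (d * E) := by
      have hh : 3 * E ≤ d * E :=
        mul_le_mul_of_nonneg_right (by linarith only [hd3]) hE0.le
      linarith only [hh]
    linarith only [hLHS, f1, f2, hXlb, hE0]



end
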